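/- For n ≥ k ≥ 1, the family of sets B_i(n,k) = {A ∈ ([n] choose ±k) : A ∩ {i,−i} ≠ ∅} for i ∈ [n] satisfies: each B_i(n,k) is a balanced set in the signed Kneser graph KS(n,k), and any n−k+1 of them cover all vertices; hence χ_b(KS(n,k)) ≤ n−k+1. -/
import Mathlib


/-- A signed `k`-subset of `[n]`: a `k`-subset `A` of `{±1,…,±n}` with `A ∩ (−A) = ∅`. -/
def IsSignedKSubset (n k : ℕ) (A : Finset ℤ) : Prop :=
  A.card = k ∧ (∀ a ∈ A, a ≠ 0 ∧ a.natAbs ≤ n) ∧ ∀ a ∈ A, -a ∉ A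

/-- A set of nonzero integers is alternating if any two of its elements that are consecutive
in absolute value have opposite signs. -/
def IsAlternating (A : Finset ℤ) : Prop :=
  ∀ a ∈ A, ∀ b ∈ A, a.natAbs < b.natAbs →
    (∀ c ∈ A, ¬(a.natAbs < c.natAbs ∧ c.natAbs < b.natAbs)) → (0 < a ↔ b < 0)

/-- The element of smallest absolute value is positive. -/
def FirstPos (A : Finset ℤ) : Prop :=
  ∀ a ∈ A, (∀ b ∈ A, a.natAbs ≤ b.natAbs) → 0 < a

/-- Positive adjacency in the signed Kneser graph: `A ∩ (−B) = ∅`. -/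
def ksPos (A B : Finset ℤ) : Prop := ∀ a ∈ A, -a ∉ B

/-- Negative adjacency in the signed Kneser graph: `A ∩ B = ∅`. -/
def ksNeg (A B : Finset ℤ) : Prop := Disjoint A B

/-- The vertices of the signed Kneser graph `KS(n,k)`. -/
def KSVertex (n k : ℕ) : Type := {A : Finset ℤ // IsSignedKSubset n k A}

/-- A set `S` of vertices of a signed graph is balanced if some switching makes all edges
inside `S` positive. -/
def IsBalancedSet {V : Type*} (pos neg : V → V → Prop) (S : Set V) : Prop :=
  ∃ X : Set V, ∀ u ∈ S, ∀ v ∈ S,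
    (pos u v → ((u ∈ X) ↔ (v ∈ X))) ∧ (neg u v → ¬((u ∈ X) ↔ (v ∈ X)))

/-- The balanced chromatic number: the least `p` such that the vertex set can be partitioned
into `p` balanced sets. -/
noncomputable def balancedChromatic {V : Type*} (pos neg : V → V → Prop) : ℕ :=
  sInf {p : ℕ | ∃ f : V → Fin p, ∀ i : Fin p, IsBalancedSet pos neg (f ⁻¹' {i})}

lemma balanced_of_mem (n k : ℕ) (i : ℤ) (S : Set (KSVertex n k))
    (hS : ∀ A ∈ S, i ∈ A.1 ∨ -i ∈ A.1) :
    IsBalancedSet (fun A B : KSVertex n k => ksPos A.1 B.1)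
      (fun A B : KSVertex n k => ksNeg A.1 B.1) S := by
  refine ⟨{A | i ∈ A.1}, fun u hu v hv => ⟨fun hp => ?_, fun hn hiff => ?_⟩⟩
  · simp only [Set.mem_setOf_eq]
    constructor
    · intro hiu
      rcases hS v hv with h | h
      · exact h
      · exact absurd h (hp i hiu)
    · intro hiv
      rcases hS u hu with h | h
      · exact h
      · exact absurd hiv (by simpa using hp (-i) h)
  · simp only [Set.mem_setOf_eq] at hiff
    rcases hS u hu with h | h
    · have hiv : i ∈ v.1 := hiff.mp h
      exact (Finset.disjoint_left.mp hn h) hiv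
    · have hiu : i ∉ u.1 := by simpa using u.2.2.2 (-i) h
      have hiv : i ∉ v.1 := fun hv' => hiu (hiff.mpr hv')
      rcases hS v hv with h' | h'
      · exact hiv h'
      · exact (Finset.disjoint_left.mp hn h) h'

/-- each set `B_i(n,k) = {A : A ∩ {i,−i} ≠ ∅}` is balanced in `KS(n,k)`, any
`n−k+1` of them cover all vertices, and hence `χ_b(KS(n,k)) ≤ n−k+1`. -/
theorem signedKneser_upper_bound (n k : ℕ) (hk : 1 ≤ k) (hkn : k ≤ n) :
    (∀ i ∈ Finset.Icc 1 n,
        IsBalancedSet (fun A B : KSVertex n k => ksPos A.1 B.1)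
          (fun A B : KSVertex n k => ksNeg A.1 B.1)
          {A : KSVertex n k | (i : ℤ) ∈ A.1 ∨ -(i : ℤ) ∈ A.1}) ∧
    (∀ I : Finset ℕ, I ⊆ Finset.Icc 1 n → I.card = n - k + 1 →
        ∀ A : KSVertex n k, ∃ i ∈ I, (i : ℤ) ∈ A.1 ∨ -(i : ℤ) ∈ A.1) ∧
    balancedChromatic (fun A B : KSVertex n k => ksPos A.1 B.1)
        (fun A B : KSVertex n k => ksNeg A.1 B.1) ≤ n - k + 1 := by
  have cover : ∀ I : Finset ℕ, I ⊆ Finset.Icc 1 n → I.card = n - k + 1 →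
      ∀ A : KSVertex n k, ∃ i ∈ I, (i : ℤ) ∈ A.1 ∨ -(i : ℤ) ∈ A.1 := by
    intro I hI hIcard A
    set J := A.1.image Int.natAbs with hJ
    have hJcard : J.card = k := by
      rw [hJ, Finset.card_image_of_injOn, A.2.1]
      intro a ha b hb hab
      rcases Int.natAbs_eq_natAbs_iff.mp hab with h | h
      · exact h
      · exact absurd (show -a ∈ A.1 by rw [h, neg_neg]; exact hb) (A.2.2.2 a ha)
    have hJsub : J ⊆ Finset.Icc 1 n := by
      intro j hj
      rcases Finset.mem_image.mp hj with ⟨a, ha, rfl⟩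
      have := A.2.2.1 a ha
      simp [Finset.mem_Icc, Int.natAbs_pos.mpr this.1, this.2]
      omega
    have hinter : (I ∩ J).Nonempty := by
      rw [← Finset.card_pos]
      have h1 : (I ∪ J).card + (I ∩ J).card = I.card + J.card :=
        Finset.card_union_add_card_inter I J
      have h2 : (I ∪ J).card ≤ n := by
        have := Finset.card_le_card (Finset.union_subset hI hJsub)
        simpa [Nat.card_Icc] using this
      omega
    obtain ⟨i, hi⟩ := hinter
    rw [Finset.mem_inter] at hi
    refine ⟨i, hi.1, ?_⟩
    rcases Finset.mem_image.mp hi.2 with ⟨a, ha, rfl⟩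
    rcases Int.natAbs_eq a with h | h
    · left; rwa [← h]
    · right; rwa [← h]
  refine ⟨fun i _ => balanced_of_mem n k (i : ℤ) _ (fun A hA => hA), cover, ?_⟩
  apply Nat.sInf_le
  have hcov : ∀ A : KSVertex n k, ∃ i, i ∈ Finset.Icc 1 (n - k + 1) ∧
      ((i : ℤ) ∈ A.1 ∨ -(i : ℤ) ∈ A.1) := by
    intro A
    have hsub : Finset.Icc 1 (n - k + 1) ⊆ Finset.Icc 1 n := by
      intro x hx; rw [Finset.mem_Icc] at *; omega
    obtain ⟨i, hi, h⟩ := cover _ hsub (by simp) A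
    exact ⟨i, hi, h⟩
  have hrange : ∀ A : KSVertex n k, (hcov A).choose - 1 < n - k + 1 := by
    intro A
    have := (hcov A).choose_spec.1
    rw [Finset.mem_Icc] at this
    omega
  refine ⟨fun A => ⟨(hcov A).choose - 1, hrange A⟩, fun i => ?_⟩
  apply balanced_of_mem n k ((i : ℕ) + 1 : ℕ)
  intro A hA
  have hfa : (hcov A).choose - 1 = (i : ℕ) := congrArg Fin.val hA
  have h1 : 1 ≤ (hcov A).choose := by
    have := (hcov A).choose_spec.1; rw [Finset.mem_Icc] at this; omega
  have : (hcov A).choose = (i : ℕ) + 1 := by omega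
  have := (hcov A).choose_spec.2
  rwa [‹(hcov A).choose = (i : ℕ) + 1›] at this
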